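/- Let L : ℝ^p → ℝ be 1-strongly convex with (unique) global minimizer θ*, and let μ be the probability measure on ℝ^p whose density with respect to Lebesgue measure is proportional to exp(−L(θ)). Then for every x ≥ 0, μ({θ : ‖θ − θ*‖₂ > √p + x}) ≤ exp(−x²/2). -/

import Mathlib

open MeasureTheory Real

/-- Quadratic growth from the minimizer for a 1-strongly convex function. -/
lemma aux_quad {p : ℕ} (L : EuclideanSpace ℝ (Fin p) → ℝ)
    (hsc : ConvexOn ℝ Set.univ fun θ => L θ - ‖θ‖ ^ 2 / 2)
    (θstar : EuclideanSpace ℝ (Fin p)) (hmin : ∀ θ, L θstar ≤ L θ)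
    (v : EuclideanSpace ℝ (Fin p)) :
    L θstar + ‖v‖ ^ 2 / 2 ≤ L (θstar + v) := by
  have key : ∀ l : ℝ, 0 < l → l < 1 →
      L θstar + (1 - l) * ‖v‖ ^ 2 / 2 ≤ L (θstar + v) := by
    intro l hl0 hl1
    have h := hsc.2 (Set.mem_univ (θstar + v)) (Set.mem_univ θstar)
      hl0.le (by linarith : (0:ℝ) ≤ 1 - l) (by ring)
    have hpt : l • (θstar + v) + (1 - l) • θstar = θstar + l • v := by module
    rw [hpt] at h
    have hmin' := hmin (θstar + l • v)
    have e1 : ‖θstar + l • v‖ ^ 2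
        = ‖θstar‖ ^ 2 + 2 * (l * (inner ℝ θstar v : ℝ)) + l ^ 2 * ‖v‖ ^ 2 := by
      rw [norm_add_sq_real, real_inner_smul_right, norm_smul, Real.norm_eq_abs,
        abs_of_pos hl0, mul_pow]
    have e2 : ‖θstar + v‖ ^ 2 = ‖θstar‖ ^ 2 + 2 * (inner ℝ θstar v : ℝ) + ‖v‖ ^ 2 :=
      norm_add_sq_real θstar v
    simp only [smul_eq_mul] at h
    nlinarith [h, hmin', e1, e2]
  by_contra hcon
  push_neg at hcon
  rcases le_or_gt (‖v‖ ^ 2 / 2) 0 with hq | hq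
  · have := hmin (θstar + v); nlinarith [sq_nonneg ‖v‖]
  · set q := ‖v‖ ^ 2 / 2 with hqdef
    set δ := L θstar + q - L (θstar + v) with hδdef
    have hδ0 : 0 < δ := by simp only [hδdef]; linarith
    set l := min (δ / q) 1 / 2 with hldef
    have hl0 : 0 < l := by
      have : 0 < min (δ / q) 1 := lt_min (div_pos hδ0 hq) one_pos
      positivity
    have hl1 : l < 1 := by
      have : min (δ / q) 1 ≤ 1 := min_le_right _ _
      simp only [hldef]; linarith
    have hk := key l hl0 hl1
    have hlq : l * q ≤ δ / 2 := by
      have h1 : min (δ / q) 1 ≤ δ / q := min_le_left _ _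
      have : l ≤ δ / q / 2 := by simp only [hldef]; linarith
      calc l * q ≤ (δ / q / 2) * q := by nlinarith
        _ = δ / 2 := by field_simp
    nlinarith

/-- Key pointwise inequality. -/
lemma aux_key {p : ℕ} (L : EuclideanSpace ℝ (Fin p) → ℝ)
    (hsc : ConvexOn ℝ Set.univ fun θ => L θ - ‖θ‖ ^ 2 / 2)
    (θstar : EuclideanSpace ℝ (Fin p)) (hmin : ∀ θ, L θstar ≤ L θ)
    {c : ℝ} (hc : 1 ≤ c) (u : EuclideanSpace ℝ (Fin p)) :
    (1 - c⁻¹ ^ 2) / 2 * ‖c • u‖ ^ 2 - L (θstar + c • u) ≤ -L (θstar + u) := by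
  have hc0 : (0:ℝ) < c := lt_of_lt_of_le one_pos hc
  have hinv : c * c⁻¹ = 1 := mul_inv_cancel₀ hc0.ne'
  have hnorm : ‖c • u‖ ^ 2 = c ^ 2 * ‖u‖ ^ 2 := by
    rw [norm_smul, Real.norm_eq_abs, abs_of_pos hc0, mul_pow]
  have hquad := aux_quad L hsc θstar hmin (c • u)
  rw [hnorm] at hquad
  have hinv1 : c⁻¹ ≤ 1 := by
    rw [inv_le_one_iff₀]; right; exact hc
  have hcombo : c⁻¹ • (θstar + c • u) + (1 - c⁻¹) • θstar = θstar + u := by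
    rw [smul_add, smul_smul, inv_mul_cancel₀ hc0.ne', one_smul]
    module
  have h := hsc.2 (Set.mem_univ (θstar + c • u)) (Set.mem_univ θstar)
    (inv_nonneg.mpr hc0.le) (by linarith : (0:ℝ) ≤ 1 - c⁻¹) (by ring)
  rw [hcombo] at h
  have e1 : ‖θstar + c • u‖ ^ 2
      = ‖θstar‖ ^ 2 + 2 * (c * (inner ℝ θstar u : ℝ)) + c ^ 2 * ‖u‖ ^ 2 := by
    rw [norm_add_sq_real, real_inner_smul_right, norm_smul, Real.norm_eq_abs,
      abs_of_pos hc0, mul_pow]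
  have e2 : ‖θstar + u‖ ^ 2 = ‖θstar‖ ^ 2 + 2 * (inner ℝ θstar u : ℝ) + ‖u‖ ^ 2 :=
    norm_add_sq_real θstar u
  simp only [smul_eq_mul] at h
  rw [e1, e2] at h
  have h2 := mul_le_mul_of_nonneg_left h hc0.le
  have hq2 := mul_le_mul_of_nonneg_left hquad (by linarith : (0:ℝ) ≤ c - 1)
  have m1 : c * c⁻¹ * L (θstar + c • u) = L (θstar + c • u) := by rw [hinv, one_mul]
  have m2 : c * c⁻¹ * L θstar = L θstar := by rw [hinv, one_mul]
  have m3 : c * c⁻¹ * ‖θstar‖ ^ 2 = ‖θstar‖ ^ 2 := by rw [hinv, one_mul]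
  have m4 : c ^ 2 * c⁻¹ * (inner ℝ θstar u : ℝ) = c * (inner ℝ θstar u : ℝ) := by
    have hcc : c ^ 2 * c⁻¹ = c := by field_simp
    rw [hcc]
  have m5 : c ^ 3 * c⁻¹ * ‖u‖ ^ 2 = c ^ 2 * ‖u‖ ^ 2 := by
    have hcc : c ^ 3 * c⁻¹ = c ^ 2 := by field_simp
    rw [hcc]
  have hg : (1 - c⁻¹ ^ 2) / 2 * ‖c • u‖ ^ 2 = (c ^ 2 - 1) * ‖u‖ ^ 2 / 2 := by
    rw [hnorm]; field_simp
  rw [hg]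
  nlinarith [h2, hq2, m1, m2, m3, m4, m5, hc0]

open scoped ENNReal

set_option maxHeartbeats 1000000 in

/-- **Gaussian-type tail bound for a 1-strongly log-concave measure.**
Let `L : ℝ^p → ℝ` be 1-strongly convex (i.e. `θ ↦ L(θ) − ‖θ‖²/2` is convex) with global
minimizer `θ*`, and let `μ` be the probability measure on `ℝ^p` with density proportional
to `exp(−L(θ))` with respect to Lebesgue measure. Then for every `x ≥ 0`,
`μ({θ : ‖θ − θ*‖₂ > √p + x}) ≤ exp(−x²/2)`. -/
theorem stronglyLogConcave_tail_bound
    {p : ℕ} (L : EuclideanSpace ℝ (Fin p) → ℝ)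
    (hsc : ConvexOn ℝ Set.univ fun θ => L θ - ‖θ‖ ^ 2 / 2)
    (θstar : EuclideanSpace ℝ (Fin p)) (hmin : ∀ θ, L θstar ≤ L θ)
    (μ : Measure (EuclideanSpace ℝ (Fin p)))
    (hμ : μ = (∫⁻ θ, ENNReal.ofReal (Real.exp (-L θ)))⁻¹ •
        volume.withDensity fun θ => ENNReal.ofReal (Real.exp (-L θ)))
    (x : ℝ) (hx : 0 ≤ x) :
    μ {θ | Real.sqrt p + x < ‖θ - θstar‖} ≤ ENNReal.ofReal (Real.exp (-x ^ 2 / 2)) := by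
  rcases Nat.eq_zero_or_pos p with hp0 | hp
  · subst hp0
    have hsub : Subsingleton (EuclideanSpace ℝ (Fin 0)) :=
      ⟨fun a b => PiLp.ext fun i => i.elim0⟩
    have hempty : {θ : EuclideanSpace ℝ (Fin 0) | Real.sqrt 0 + x < ‖θ - θstar‖} = ∅ := by
      ext θ
      have hθ : θ - θstar = 0 := Subsingleton.elim _ _
      simp only [Set.mem_setOf_eq, hθ, norm_zero, Set.mem_empty_iff_false, iff_false, not_lt]
      simp only [Real.sqrt_zero, zero_add]
      exact hx
    simp only [Nat.cast_zero] at *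
    rw [hempty]
    simp only [measure_empty]
    exact zero_le
  -- main case p > 0
  have hp' : (0:ℝ) < p := by exact_mod_cast hp
  have hsp : 0 < Real.sqrt p := Real.sqrt_pos.mpr hp'
  have hsq : Real.sqrt p ^ 2 = (p:ℝ) := Real.sq_sqrt hp'.le
  set t : ℝ := Real.sqrt p + x with ht
  have ht0 : 0 < t := by positivity
  set c : ℝ := t / Real.sqrt p with hcdef
  have hc : 1 ≤ c := by rw [hcdef, le_div_iff₀ hsp]; linarith
  have hc0 : (0:ℝ) < c := lt_of_lt_of_le one_pos hc
  set s : ℝ := (1 - c⁻¹ ^ 2) / 2 with hs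
  have hcinv1 : c⁻¹ ≤ 1 := by rw [inv_le_one_iff₀]; right; exact hc
  have hcinv0 : (0:ℝ) ≤ c⁻¹ := by positivity
  have hs0 : 0 ≤ s := by rw [hs]; nlinarith
  -- continuity and measurability
  have hLcont : Continuous L := by
    have h1 : Continuous fun θ : EuclideanSpace ℝ (Fin p) => L θ - ‖θ‖ ^ 2 / 2 := by
      rw [← continuousOn_univ]
      exact hsc.continuousOn isOpen_univ
    have h2 : Continuous fun θ : EuclideanSpace ℝ (Fin p) => ‖θ‖ ^ 2 / 2 :=
      (continuous_norm.pow 2).div_const 2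
    have h3 := h1.add h2
    simpa [Pi.add_def] using h3
  set A := {θ : EuclideanSpace ℝ (Fin p) | t < ‖θ - θstar‖} with hAdef
  have hA : MeasurableSet A :=
    measurableSet_lt measurable_const ((continuous_id.sub continuous_const).norm.measurable)
  set f : EuclideanSpace ℝ (Fin p) → ℝ≥0∞ := fun θ => ENNReal.ofReal (Real.exp (-L θ))
    with hfdef
  have hfm : Measurable f :=
    ENNReal.measurable_ofReal.comp (Real.continuous_exp.comp hLcont.neg).measurable
  set Z := ∫⁻ θ, f θ with hZ
  set g : EuclideanSpace ℝ (Fin p) → ℝ≥0∞ :=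
    fun θ => ENNReal.ofReal (Real.exp (s * ‖θ - θstar‖ ^ 2 - L θ)) with hgdef
  have hgm : Measurable g := by
    apply ENNReal.measurable_ofReal.comp
    apply Continuous.measurable
    exact Real.continuous_exp.comp
      (((continuous_const.mul ((continuous_id.sub continuous_const).norm.pow 2)).sub hLcont))
  set G : EuclideanSpace ℝ (Fin p) → ℝ≥0∞ :=
    fun v => ENNReal.ofReal (Real.exp (s * ‖v‖ ^ 2 - L (θstar + v))) with hGdef
  have hGm : Measurable G := by
    apply ENNReal.measurable_ofReal.comp
    apply Continuous.measurable
    exact Real.continuous_exp.comp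
      ((continuous_const.mul (continuous_norm.pow 2)).sub
        (hLcont.comp (continuous_const.add continuous_id)))
  have hμA : μ A = Z⁻¹ * ∫⁻ θ in A, f θ := by
    rw [hμ, Measure.smul_apply, withDensity_apply _ hA, smul_eq_mul]
  -- step 1
  have step1 : ∫⁻ θ in A, f θ ≤ ENNReal.ofReal (Real.exp (-(s * t ^ 2))) * ∫⁻ θ, g θ := by
    have hpt : ∀ θ ∈ A, f θ ≤ ENNReal.ofReal (Real.exp (-(s * t ^ 2))) * g θ := by
      intro θ hθ
      have h1 : t < ‖θ - θstar‖ := hθ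
      have h2 : t ^ 2 ≤ ‖θ - θstar‖ ^ 2 := by nlinarith [norm_nonneg (θ - θstar)]
      rw [hfdef, hgdef]
      simp only
      rw [← ENNReal.ofReal_mul (Real.exp_nonneg _), ← Real.exp_add]
      apply ENNReal.ofReal_le_ofReal
      apply Real.exp_le_exp.mpr
      nlinarith [mul_le_mul_of_nonneg_left h2 hs0]
    calc ∫⁻ θ in A, f θ
        ≤ ∫⁻ θ in A, ENNReal.ofReal (Real.exp (-(s * t ^ 2))) * g θ :=
          setLIntegral_mono (measurable_const.mul hgm) hpt
      _ ≤ ∫⁻ θ, ENNReal.ofReal (Real.exp (-(s * t ^ 2))) * g θ :=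
          setLIntegral_le_lintegral _ _
      _ = ENNReal.ofReal (Real.exp (-(s * t ^ 2))) * ∫⁻ θ, g θ :=
          lintegral_const_mul' _ _ ENNReal.ofReal_ne_top
  -- step 2 : translation
  have step2 : ∫⁻ θ, g θ = ∫⁻ v, G v := by
    have h := (measurePreserving_add_left (volume : Measure (EuclideanSpace ℝ (Fin p)))
      θstar).lintegral_comp hgm
    rw [← h]
    congr 1
    funext v
    rw [hgdef, hGdef]
    simp only [add_sub_cancel_left]
  -- step 3 : scaling
  have hcpow : (0:ℝ) < c ^ p := pow_pos hc0 p
  have step3 : ∫⁻ v, G v = ENNReal.ofReal (c ^ p) * ∫⁻ u, G (c • u) := by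
    have hmap := Measure.map_addHaar_smul (volume : Measure (EuclideanSpace ℝ (Fin p))) hc0.ne'
    have h1 : ∫⁻ u, G (c • u) = ∫⁻ v, G v ∂(Measure.map (fun u => c • u) volume) :=
      (lintegral_map hGm (continuous_const_smul c).measurable).symm
    rw [hmap, lintegral_smul_measure, finrank_euclideanSpace_fin, smul_eq_mul] at h1
    rw [h1, ← mul_assoc, ← ENNReal.ofReal_mul hcpow.le,
      abs_of_pos (by positivity : (0:ℝ) < (c ^ p)⁻¹), mul_inv_cancel₀ hcpow.ne']
    simp
  -- step 4 : pointwise comparison after scaling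
  have step4 : ∫⁻ u, G (c • u) ≤ ∫⁻ u, f (θstar + u) := by
    apply lintegral_mono
    intro u
    rw [hGdef, hfdef]
    simp only
    apply ENNReal.ofReal_le_ofReal
    apply Real.exp_le_exp.mpr
    rw [hs]
    exact aux_key L hsc θstar hmin hc u
  -- step 5 : translation back
  have step5 : ∫⁻ u, f (θstar + u) = Z := by
    exact (measurePreserving_add_left (volume : Measure (EuclideanSpace ℝ (Fin p)))
      θstar).lintegral_comp hfm
  -- combine
  have main : ∫⁻ θ in A, f θ ≤ ENNReal.ofReal (Real.exp (-(s * t ^ 2)) * c ^ p) * Z := by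
    calc ∫⁻ θ in A, f θ
        ≤ ENNReal.ofReal (Real.exp (-(s * t ^ 2))) * ∫⁻ θ, g θ := step1
      _ = ENNReal.ofReal (Real.exp (-(s * t ^ 2))) * (ENNReal.ofReal (c ^ p) * ∫⁻ u, G (c • u)) := by
          rw [step2, step3]
      _ ≤ ENNReal.ofReal (Real.exp (-(s * t ^ 2))) * (ENNReal.ofReal (c ^ p) * ∫⁻ u, f (θstar + u)) := by
          exact mul_le_mul_right (mul_le_mul_right step4 _) _
      _ = ENNReal.ofReal (Real.exp (-(s * t ^ 2)) * c ^ p) * Z := by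
          rw [step5, ENNReal.ofReal_mul (Real.exp_nonneg _), mul_assoc]
  have hμAle : μ A ≤ ENNReal.ofReal (Real.exp (-(s * t ^ 2)) * c ^ p) := by
    rw [hμA]
    calc Z⁻¹ * ∫⁻ θ in A, f θ
        ≤ Z⁻¹ * (ENNReal.ofReal (Real.exp (-(s * t ^ 2)) * c ^ p) * Z) :=
          mul_le_mul_right main _
      _ = ENNReal.ofReal (Real.exp (-(s * t ^ 2)) * c ^ p) * (Z⁻¹ * Z) := by ring
      _ ≤ ENNReal.ofReal (Real.exp (-(s * t ^ 2)) * c ^ p) * 1 :=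
          mul_le_mul_right (ENNReal.inv_mul_le_one Z) _
      _ = ENNReal.ofReal (Real.exp (-(s * t ^ 2)) * c ^ p) := mul_one _
  refine hμAle.trans (ENNReal.ofReal_le_ofReal ?_)
  -- the real-number estimate
  have hcinv : c⁻¹ ^ 2 = (p:ℝ) / t ^ 2 := by
    rw [hcdef, inv_div, div_pow, hsq]
  have hst : s * t ^ 2 = (t ^ 2 - (p:ℝ)) / 2 := by
    have ht2 : (t:ℝ) ^ 2 ≠ 0 := by positivity
    have hmul : (p:ℝ) / t ^ 2 * t ^ 2 = p := div_mul_cancel₀ _ ht2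
    rw [hs, hcinv]
    linear_combination -hmul / 2
  have hcp : c ^ p ≤ Real.exp (Real.sqrt p * x) := by
    have h1 : c = 1 + x / Real.sqrt p := by
      rw [hcdef, ht, add_div, div_self hsp.ne']
    have h2 : c ≤ Real.exp (x / Real.sqrt p) := by
      rw [h1]
      have := Real.add_one_le_exp (x / Real.sqrt p)
      linarith
    calc c ^ p ≤ Real.exp (x / Real.sqrt p) ^ p := pow_le_pow_left₀ hc0.le h2 p
      _ = Real.exp ((p : ℝ) * (x / Real.sqrt p)) := by rw [← Real.exp_nat_mul]
      _ = Real.exp (Real.sqrt p * x) := by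
          congr 1
          have hdiv : x / Real.sqrt p * Real.sqrt p = x := div_mul_cancel₀ _ hsp.ne'
          linear_combination (-(x / Real.sqrt (p:ℝ))) * hsq + Real.sqrt (p:ℝ) * hdiv
  calc Real.exp (-(s * t ^ 2)) * c ^ p
      ≤ Real.exp (-(s * t ^ 2)) * Real.exp (Real.sqrt p * x) := by
        exact mul_le_mul_of_nonneg_left hcp (Real.exp_nonneg _)
    _ = Real.exp (-(s * t ^ 2) + Real.sqrt p * x) := (Real.exp_add _ _).symm
    _ = Real.exp (-x ^ 2 / 2) := by
        congr 1
        rw [hst, ht]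
        linear_combination -(hsq) / 2
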